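/- arXiv:2311.17886 — 2 statements merged into one kernel-verified Lean document; each statement's English description precedes it below -/
import Mathlib

section
/- Let B : ℝ^t → T^{≥1}(ℝ^n) be linear and let X, Y be paths in ℝ^n with X₀ = 0 and Y₀ = 0. Then Λ_B^*(X ⊔ Y) = (Λ_B^* X) ⊔ (Λ_{δ_X B}^* Y) as paths in ℝ^t, where δ_X B is the linear map with δ_X B(i) := B(i) + Σ' ⟨σ(X), u⟩·v, the sum Σ' running over the deconcatenation splittings B(i) = Σ u·v into nonempty prefix u and nonempty suffix v (i.e. the reduced deconcatenation coproduct of B(i) paired with σ(X) in the first slot). -/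
open scoped BigOperators TensorProduct

namespace PathVarieties

/-- Words over an alphabet `α`; the letters `{1,…,d}` of `ℝ^d` correspond to `α = Fin d`. -/
abbrev Word (α : Type*) := List α

/-- The tensor algebra `T(ℝ^d)`, identified with the free real vector space on words. -/
abbrev TA (α : Type*) := Word α →₀ ℝ

/-- The list of all (riffle) shuffles of two words. -/
def shuffles {α : Type*} : Word α → Word α → List (Word α)
  | [], v => [v]
  | a :: u, [] => [a :: u]
  | a :: u, b :: v =>
      ((shuffles u (b :: v)).map (a :: ·)) ++ ((shuffles (a :: u) v).map (b :: ·))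
termination_by u v => u.length + v.length
decreasing_by all_goals (simp only [List.length_cons]; omega)

/-- Shuffle product of two words, as an element of `T(ℝ^d)`. -/
noncomputable def shw {α : Type*} (u v : Word α) : TA α :=
  ((shuffles u v).map fun w => Finsupp.single w (1 : ℝ)).sum

/-- The shuffle product `⧢` on `T(ℝ^d)`, the bilinear extension of the shuffle of words. -/
noncomputable def sh {α : Type*} (x y : TA α) : TA α :=
  x.sum fun u cu => y.sum fun v cv => (cu * cv) • shw u v

/-- Right halfshuffle `u ≻ v` of words (`v` nonempty): shuffle `u` with `v` minus its
last letter, then append the last letter of `v`.  (This is the unique bilinear operation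
with `w ≻ a = wa` and `w ≻ (va) = (w≻v + v≻w)a`.) -/
noncomputable def rshw {α : Type*} (u v : Word α) : TA α :=
  ((shuffles u v.dropLast).map fun w =>
    Finsupp.single (w ++ v.drop (v.length - 1)) (1 : ℝ)).sum

/-- Right halfshuffle `≻` on `T^{≥1}(ℝ^d)`, extended bilinearly. -/
noncomputable def rsh {α : Type*} (x y : TA α) : TA α :=
  x.sum fun u cu => y.sum fun v cv => (cu * cv) • rshw u v

/-- Left halfshuffle `u ≺ v` of words (`u` nonempty): the first letter of `u` followed by
the shuffle of the rest of `u` with `v`.  (This is the unique bilinear operation with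
`a ≺ w = aw` and `(av) ≺ w = a(w≺v + v≺w)`.) -/
noncomputable def lshw {α : Type*} (u v : Word α) : TA α :=
  ((shuffles u.tail v).map fun w => Finsupp.single (u.take 1 ++ w) (1 : ℝ)).sum

/-- Left halfshuffle `≺` on `T^{≥1}(ℝ^d)`, extended bilinearly. -/
noncomputable def lsh {α : Type*} (x y : TA α) : TA α :=
  x.sum fun u cu => y.sum fun v cv => (cu * cv) • lshw u v

/-- The antipode `𝒜`, with `𝒜(i₁⋯iₙ) = (−1)ⁿ iₙ⋯i₁`. -/
noncomputable def antipode {α : Type*} (x : TA α) : TA α :=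
  x.sum fun w c => Finsupp.single w.reverse (((-1 : ℝ) ^ w.length) * c)

/-- Helper for `Λ_B`: value on a reversed word. -/
noncomputable def lamRev {α β : Type*} (B : α → TA β) : Word α → TA β
  | [] => Finsupp.single [] 1
  | [i] => B i
  | i :: w => rsh (lamRev B w) (B i)

/-- `Λ_B` on a word: `Λ_B e = e`, `Λ_B i = B i`, `Λ_B (w·i) = (Λ_B w) ≻ (Λ_B i)`. -/
noncomputable def lamW {α β : Type*} (B : α → TA β) (w : Word α) : TA β :=
  lamRev B w.reverse

/-- The linear map `Λ_B : T(ℝ^t) → T(ℝ^d)` induced by `B` on letters. -/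
noncomputable def Lam {α β : Type*} (B : α → TA β) (x : TA α) : TA β :=
  x.sum fun w c => c • lamW B w

/-- `splitEmb e j n w = Σ_{w = u₁⋯uₙ} e_j(u₁) ⧢ e_{j+1}(u₂) ⧢ ⋯ ⧢ e_{j+n−1}(uₙ)`,
the sum over all splittings of `w` into `n` consecutive (possibly empty) factors,
each factor relabelled letterwise by `e`. -/
noncomputable def splitEmb {α β : Type*} (e : ℕ → α → β) : ℕ → ℕ → Word α → TA β
  | _, 0, w => if w.isEmpty then Finsupp.single ([] : Word β) (1 : ℝ) else 0
  | j, k + 1, w => ∑ m ∈ Finset.range (w.length + 1),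
      sh (Finsupp.single ((w.take m).map (e j)) (1 : ℝ)) (splitEmb e (j + 1) k (w.drop m))

/-- `Σ_{x=uv} f(u)·v`: deconcatenate, evaluate the functional `f` on prefixes. -/
noncomputable def leftAct {α : Type*} (f : Word α → ℝ) (x : TA α) : TA α :=
  x.sum fun w c => c • ∑ k ∈ Finset.range (w.length + 1),
    f (w.take k) • Finsupp.single (w.drop k) (1 : ℝ)

/-- `Σ_{x=uv} u·f(v)`: deconcatenate, evaluate the functional `f` on suffixes. -/
noncomputable def rightAct {α : Type*} (f : Word α → ℝ) (x : TA α) : TA α :=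
  x.sum fun w c => c • ∑ k ∈ Finset.range (w.length + 1),
    f (w.drop k) • Finsupp.single (w.take k) (1 : ℝ)

/-- A raw path: a time horizon `T` together with a map `ℝ → ℝ^α`
(only the restriction to `[0,T]` is relevant). -/
structure RawPath (α : Type*) where
  T : ℝ
  toFun : ℝ → α → ℝ

/-- A path: positive time horizon, continuous on `[0,T]` and piecewise continuously
differentiable there (witnessed by a partition `0 = τ₀ < τ₁ < ⋯ < τₙ = T`). -/
def IsPath {α : Type*} (X : RawPath α) : Prop :=
  0 < X.T ∧ (∀ i, ContinuousOn (fun t => X.toFun t i) (Set.Icc 0 X.T)) ∧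
    ∃ (n : ℕ) (τ : Fin (n + 1) → ℝ), StrictMono τ ∧ τ 0 = 0 ∧ τ (Fin.last n) = X.T ∧
      ∀ (k : Fin n) (i : α), ContDiffOn ℝ 1 (fun t => X.toFun t i)
        (Set.Icc (τ k.castSucc) (τ k.succ))

/-- Iterated integrals, by recursion on the reversed word:
`sigRev X (i :: w) t = ∫₀ᵗ ⟨σ(X)ₛ, w.reverse⟩ dX⁽ⁱ⁾(s)`. -/
noncomputable def sigRev {α : Type*} (X : ℝ → α → ℝ) : Word α → ℝ → ℝ
  | [], _ => 1
  | i :: w, t => ∫ s in (0 : ℝ)..t, sigRev X w s * deriv (fun u => X u i) s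

/-- `⟨σ(X)_t, w⟩`, the iterated-integrals signature of `X` stopped at time `t`. -/
noncomputable def sigUpTo {α : Type*} (X : RawPath α) (t : ℝ) (w : Word α) : ℝ :=
  sigRev X.toFun w.reverse t

/-- `⟨σ(X), w⟩`, the iterated-integrals signature of the path `X` at a word `w`. -/
noncomputable def sig {α : Type*} (X : RawPath α) (w : Word α) : ℝ :=
  sigUpTo X X.T w

/-- Pairing of a word-indexed functional with an element of `T(ℝ^d)`. -/
noncomputable def pairF {α : Type*} (f : Word α → ℝ) (x : TA α) : ℝ :=
  x.sum fun w c => c * f w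

/-- `⟨σ(X), x⟩` for a tensor `x ∈ T(ℝ^d)` (linear in `x`). -/
noncomputable def pair {α : Type*} (X : RawPath α) (x : TA α) : ℝ :=
  Finsupp.linearCombination ℝ (sig X) x

/-- The path variety `𝒱(W)` of all paths whose signature kills every element of `W`. -/
def V {α : Type*} (W : Set (TA α)) : Set (RawPath α) :=
  {X | IsPath X ∧ ∀ x ∈ W, pair X x = 0}

/-- `ℐ(M)`, the space of tensors killed by the signature of every path in `M`. -/
noncomputable def Idl {α : Type*} (M : Set (RawPath α)) : Submodule ℝ (TA α) :=
  ⨅ X ∈ M, LinearMap.ker (Finsupp.linearCombination ℝ (sig X))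

/-- Concatenation `X ⊔ Y` of paths. -/
noncomputable def concat {α : Type*} (X Y : RawPath α) : RawPath α where
  T := X.T + Y.T
  toFun := fun t i =>
    if t ≤ X.T then X.toFun t i else Y.toFun (t - X.T) i + X.toFun X.T i - Y.toFun 0 i

/-- Time reversal `⟵X`. -/
def timeRev {α : Type*} (X : RawPath α) : RawPath α :=
  ⟨X.T, fun t i => X.toFun (X.T - t) i⟩

/-- `concatIter X n = X^{⊔(n+1)}`. -/
noncomputable def concatIter {α : Type*} (X : RawPath α) : ℕ → RawPath α
  | 0 => X
  | n + 1 => concat (concatIter X n) X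

/-- `X^{⊔n}`, the `n`-fold concatenation of `X` with itself (intended for `n ≥ 1`). -/
noncomputable def concatPow {α : Type*} (X : RawPath α) (n : ℕ) : RawPath α :=
  concatIter X (n - 1)

/-- `concatFold f k = f 0 ⊔ f 1 ⊔ ⋯ ⊔ f k`. -/
noncomputable def concatFold {α : Type*} (f : ℕ → RawPath α) : ℕ → RawPath α
  | 0 => f 0
  | k + 1 => concat (concatFold f k) (f (k + 1))

/-- The deconcatenation coproduct `Δ : T(ℝ^d) → T(ℝ^d) ⊗ T(ℝ^d)`,
`Δw = Σ_{w=uv} u ⊗ v`. -/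
noncomputable def deconc {α : Type*} (x : TA α) : TensorProduct ℝ (TA α) (TA α) :=
  x.sum fun w c => c • ∑ k ∈ Finset.range (w.length + 1),
    (Finsupp.single (w.take k) (1 : ℝ)) ⊗ₜ[ℝ] (Finsupp.single (w.drop k) (1 : ℝ))


section Aux

open MeasureTheory Set intervalIntegral

variable {α : Type*}

lemma aux_intervalIntegrable_congr_Ioo {f g : ℝ → ℝ} {a b : ℝ} (hab : a ≤ b)
    (h : ∀ u ∈ Set.Ioo a b, f u = g u) (hf : IntervalIntegrable f volume a b) :
    IntervalIntegrable g volume a b := by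
  rw [intervalIntegrable_iff_integrableOn_Ioc_of_le hab,
    integrableOn_Ioc_iff_integrableOn_Ioo] at *
  exact hf.congr_fun h measurableSet_Ioo

lemma aux_intervalIntegrable_deriv_of_contDiffOn {f : ℝ → ℝ} {a b : ℝ} (hab : a ≤ b)
    (h : ContDiffOn ℝ 1 f (Set.Icc a b)) :
    IntervalIntegrable (deriv f) volume a b := by
  rcases eq_or_lt_of_le hab with rfl | hab
  · exact IntervalIntegrable.refl
  have hcont : ContinuousOn (derivWithin f (Set.Icc a b)) (Set.Icc a b) :=
    h.continuousOn_derivWithin (uniqueDiffOn_Icc hab) le_rfl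
  have hint : IntervalIntegrable (derivWithin f (Set.Icc a b)) volume a b := by
    rw [intervalIntegrable_iff_integrableOn_Ioc_of_le hab.le]
    exact (hcont.integrableOn_Icc).mono_set Set.Ioc_subset_Icc_self
  refine aux_intervalIntegrable_congr_Ioo hab.le (fun u hu => ?_) hint
  exact derivWithin_of_mem_nhds (Icc_mem_nhds hu.1 hu.2)

lemma aux_isPath_deriv_intervalIntegrable (X : RawPath α) (hX : IsPath X) (i : α) :
    IntervalIntegrable (deriv fun t => X.toFun t i) volume 0 X.T := by
  obtain ⟨hT, hcont, n, τ, hmono, h0, hlast, hpieces⟩ := hX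
  have key : ∀ k : ℕ, (hk : k ≤ n) →
      IntervalIntegrable (deriv fun t => X.toFun t i) volume (τ 0) (τ ⟨k, Nat.lt_succ_of_le hk⟩) := by
    intro k
    induction k with
    | zero =>
      intro _
      exact IntervalIntegrable.refl
    | succ k ih =>
      intro hk
      have hk' : k ≤ n := Nat.le_of_succ_le hk
      have h1 := ih hk'
      have hle : τ (⟨k, hk⟩ : Fin n).castSucc ≤ τ (⟨k, hk⟩ : Fin n).succ := by
        apply le_of_lt
        apply hmono
        simp [Fin.lt_def]
      have h2 := aux_intervalIntegrable_deriv_of_contDiffOn hle (hpieces ⟨k, hk⟩ i)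
      have e1 : (⟨k, hk⟩ : Fin n).castSucc = (⟨k, Nat.lt_succ_of_le hk'⟩ : Fin (n+1)) := rfl
      have e2 : (⟨k, hk⟩ : Fin n).succ = (⟨k + 1, Nat.lt_succ_of_le hk⟩ : Fin (n+1)) := rfl
      rw [e1, e2] at h2
      exact h1.trans h2
  have h := key n le_rfl
  rw [h0] at h
  have e : (⟨n, Nat.lt_succ_of_le le_rfl⟩ : Fin (n+1)) = Fin.last n := rfl
  rw [e, hlast] at h
  exact h

lemma aux_deriv_concat_left (X Y : RawPath α) (i : α) {u : ℝ} (hu : u < X.T) :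
    deriv (fun t => (concat X Y).toFun t i) u = deriv (fun t => X.toFun t i) u := by
  apply Filter.EventuallyEq.deriv_eq
  filter_upwards [Iio_mem_nhds hu] with v hv
  simp [concat, (Set.mem_Iio.mp hv).le]

lemma aux_deriv_concat_right (X Y : RawPath α) (i : α) {u : ℝ} (hu : X.T < u) :
    deriv (fun t => (concat X Y).toFun t i) u = deriv (fun t => Y.toFun t i) (u - X.T) := by
  have h : (fun t => (concat X Y).toFun t i) =ᶠ[nhds u]
      fun t => Y.toFun (t - X.T) i + X.toFun X.T i - Y.toFun 0 i := by
    filter_upwards [Ioi_mem_nhds hu] with v hv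
    have hv' : ¬ v ≤ X.T := not_le.mpr (Set.mem_Ioi.mp hv)
    simp [concat, hv']
  rw [h.deriv_eq, deriv_sub_const, deriv_add_const,
    deriv_comp_sub_const (f := fun s => Y.toFun s i)]

lemma aux_concat_deriv_intervalIntegrable (X Y : RawPath α) (hX : IsPath X) (hY : IsPath Y)
    (i : α) :
    IntervalIntegrable (deriv fun t => (concat X Y).toFun t i) volume 0 (X.T + Y.T) := by
  have hT1 : 0 < X.T := hX.1
  have hT2 : 0 < Y.T := hY.1
  have hX' := aux_isPath_deriv_intervalIntegrable X hX i
  have hY' := aux_isPath_deriv_intervalIntegrable Y hY i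
  have h1 : IntervalIntegrable (deriv fun t => (concat X Y).toFun t i) volume 0 X.T :=
    aux_intervalIntegrable_congr_Ioo hT1.le
      (fun u hu => (aux_deriv_concat_left X Y i hu.2).symm) hX'
  have h2 : IntervalIntegrable (deriv fun t => (concat X Y).toFun t i) volume X.T (X.T + Y.T) := by
    have := hY'.comp_sub_right X.T
    rw [zero_add, add_comm Y.T X.T] at this
    exact aux_intervalIntegrable_congr_Ioo (by linarith)
      (fun u hu => (aux_deriv_concat_right X Y i hu.1).symm) this
  exact h1.trans h2

lemma aux_sigRev_cont_int (f : ℝ → α → ℝ) (S : ℝ) (hS : 0 ≤ S)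
    (hf : ∀ i, IntervalIntegrable (deriv fun u => f u i) volume 0 S) (w : Word α) :
    ContinuousOn (sigRev f w) (Set.Icc 0 S) ∧
      ∀ i, IntervalIntegrable (fun u => sigRev f w u * deriv (fun t => f t i) u) volume 0 S := by
  induction w with
  | nil =>
    refine ⟨continuousOn_const, fun i => ?_⟩
    simpa [sigRev] using hf i
  | cons a w ih =>
    have hcont : ContinuousOn (sigRev f (a :: w)) (Set.Icc 0 S) := by
      have h := intervalIntegral.continuousOn_primitive_interval' (ih.2 a)
        (Set.left_mem_uIcc (a := (0:ℝ)) (b := S))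
      rw [Set.uIcc_of_le hS] at h
      exact h.congr (fun t _ => by simp [sigRev])
    refine ⟨hcont, fun j => ?_⟩
    have hj : IntegrableOn (deriv fun u => f u j) (Set.Icc 0 S) volume := by
      rw [integrableOn_Icc_iff_integrableOn_Ioc]
      exact (intervalIntegrable_iff_integrableOn_Ioc_of_le hS).mp (hf j)
    have := IntegrableOn.continuousOn_mul hcont hj isCompact_Icc
    rw [intervalIntegrable_iff_integrableOn_Ioc_of_le hS]
    exact this.mono_set Set.Ioc_subset_Icc_self

lemma aux_ae_ne (c : ℝ) : ∀ᵐ u : ℝ, u ≠ c := by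
  rw [MeasureTheory.ae_iff]
  simp only [not_not, Set.setOf_eq_eq_singleton]
  exact measure_singleton c

lemma aux_sigRev_concat_left (X Y : RawPath α) (hXT : 0 ≤ X.T) (w : Word α) :
    ∀ s ∈ Set.Icc 0 X.T, sigRev (concat X Y).toFun w s = sigRev X.toFun w s := by
  induction w with
  | nil => intro s _; rfl
  | cons a w ih =>
    intro s hs
    simp only [sigRev]
    apply intervalIntegral.integral_congr_ae
    filter_upwards [aux_ae_ne X.T] with u hu hmem
    rw [Set.uIoc_of_le hs.1] at hmem
    have hu2 : u ≤ X.T := le_trans hmem.2 hs.2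
    rw [ih u ⟨hmem.1.le, hu2⟩, aux_deriv_concat_left X Y a (lt_of_le_of_ne hu2 hu)]

lemma aux_sigRev_concat_chen (X Y : RawPath α) (hX : IsPath X) (hY : IsPath Y) (w : Word α) :
    ∀ s ∈ Set.Icc X.T (X.T + Y.T),
      sigRev (concat X Y).toFun w s =
        ∑ k ∈ Finset.range (w.length + 1),
          sigRev Y.toFun (w.take k) (s - X.T) * sigRev X.toFun (w.drop k) X.T := by
  have hT1 : (0:ℝ) ≤ X.T := hX.1.le
  have hT2 : (0:ℝ) ≤ Y.T := hY.1.le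
  have hS : (0:ℝ) ≤ X.T + Y.T := by linarith
  have hZint := fun i => aux_concat_deriv_intervalIntegrable X Y hX hY i
  have hZ := fun w => aux_sigRev_cont_int (concat X Y).toFun (X.T + Y.T) hS hZint w
  have hYint := fun i => aux_isPath_deriv_intervalIntegrable Y hY i
  have hYp := fun w => aux_sigRev_cont_int Y.toFun Y.T hT2 hYint w
  induction w with
  | nil =>
    intro s _
    simp [sigRev]
  | cons a w ih =>
    intro s hs
    obtain ⟨hs1, hs2⟩ := hs
    have hZi := (hZ w).2 a
    have int1 : IntervalIntegrable
        (fun u => sigRev (concat X Y).toFun w u * deriv (fun t => (concat X Y).toFun t a) u)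
        volume 0 X.T := by
      apply hZi.mono_set
      rw [Set.uIcc_of_le hT1, Set.uIcc_of_le hS]
      exact Set.Icc_subset_Icc le_rfl (by linarith)
    have int2 : IntervalIntegrable
        (fun u => sigRev (concat X Y).toFun w u * deriv (fun t => (concat X Y).toFun t a) u)
        volume X.T s := by
      apply hZi.mono_set
      rw [Set.uIcc_of_le hs1, Set.uIcc_of_le hS]
      exact Set.Icc_subset_Icc hT1 hs2
    show (∫ u in (0:ℝ)..s,
        sigRev (concat X Y).toFun w u * deriv (fun t => (concat X Y).toFun t a) u) = _
    rw [← intervalIntegral.integral_add_adjacent_intervals int1 int2]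
    have e1 : (∫ u in (0:ℝ)..X.T, sigRev (concat X Y).toFun w u *
        deriv (fun t => (concat X Y).toFun t a) u) = sigRev X.toFun (a :: w) X.T := by
      have h := aux_sigRev_concat_left X Y hT1 (a :: w) X.T ⟨hT1, le_rfl⟩
      simpa [sigRev] using h
    have e2 : (∫ u in X.T..s, sigRev (concat X Y).toFun w u *
        deriv (fun t => (concat X Y).toFun t a) u) =
        ∑ k ∈ Finset.range (w.length + 1),
          sigRev Y.toFun (a :: w.take k) (s - X.T) * sigRev X.toFun (w.drop k) X.T := by
      have step1 : (∫ u in X.T..s, sigRev (concat X Y).toFun w u *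
          deriv (fun t => (concat X Y).toFun t a) u) =
          ∫ u in X.T..s, ∑ k ∈ Finset.range (w.length + 1),
            (sigRev Y.toFun (w.take k) (u - X.T) * deriv (fun t => Y.toFun t a) (u - X.T)) *
              sigRev X.toFun (w.drop k) X.T := by
        apply intervalIntegral.integral_congr_ae
        apply Filter.Eventually.of_forall
        intro u hmem
        rw [Set.uIoc_of_le hs1] at hmem
        rw [ih u ⟨hmem.1.le, le_trans hmem.2 hs2⟩, aux_deriv_concat_right X Y a hmem.1,
          Finset.sum_mul]
        exact Finset.sum_congr rfl fun k _ => by ring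
      rw [step1]
      have step2 := intervalIntegral.integral_comp_sub_right (a := X.T) (b := s)
        (f := fun v => ∑ k ∈ Finset.range (w.length + 1),
          (sigRev Y.toFun (w.take k) v * deriv (fun t => Y.toFun t a) v) *
            sigRev X.toFun (w.drop k) X.T) X.T
      rw [sub_self] at step2
      rw [step2]
      have intk : ∀ k ∈ Finset.range (w.length + 1), IntervalIntegrable
          (fun v => (sigRev Y.toFun (w.take k) v * deriv (fun t => Y.toFun t a) v) *
            sigRev X.toFun (w.drop k) X.T) volume 0 (s - X.T) := by
        intro k _
        apply (((hYp (w.take k)).2 a).mul_const _).mono_set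
        rw [Set.uIcc_of_le (by linarith : (0:ℝ) ≤ s - X.T), Set.uIcc_of_le hT2]
        exact Set.Icc_subset_Icc le_rfl (by linarith)
      rw [intervalIntegral.integral_finset_sum intk]
      refine Finset.sum_congr rfl fun k _ => ?_
      rw [intervalIntegral.integral_mul_const]
      simp [sigRev]
    rw [e1, e2]
    show _ = ∑ k ∈ Finset.range (w.length + 1 + 1), _
    conv_rhs => rw [Finset.sum_range_succ']
    simp only [List.take_succ_cons, List.drop_succ_cons, List.take_zero, List.drop_zero]
    rw [show sigRev Y.toFun ([] : Word α) (s - X.T) = 1 by simp [sigRev], one_mul, add_comm]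

lemma aux_pairF_eq (f : Word α → ℝ) (x : TA α) :
    pairF f x = Finsupp.linearCombination ℝ f x := by
  rw [pairF, Finsupp.linearCombination_apply]
  exact Finsupp.sum_congr fun w _ => (smul_eq_mul _ _).symm

lemma aux_pairF_add (f : Word α → ℝ) (x y : TA α) :
    pairF f (x + y) = pairF f x + pairF f y := by
  simp [aux_pairF_eq]

lemma aux_pairF_smul (f : Word α → ℝ) (c : ℝ) (x : TA α) :
    pairF f (c • x) = c * pairF f x := by
  simp [aux_pairF_eq]

lemma aux_pairF_single (f : Word α → ℝ) (w : Word α) (c : ℝ) :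
    pairF f (Finsupp.single w c) = c * f w := by
  simp [aux_pairF_eq, Finsupp.linearCombination_single, smul_eq_mul]

lemma aux_pairF_finsupp_sum (f : Word α → ℝ) (x : TA α) (g : Word α → ℝ → TA α) :
    pairF f (x.sum g) = x.sum fun w c => pairF f (g w c) := by
  simp only [aux_pairF_eq]
  exact map_finsuppSum _ _ _

lemma aux_pairF_finset_sum {ι : Type*} (f : Word α → ℝ) (S : Finset ι) (g : ι → TA α) :
    pairF f (∑ k ∈ S, g k) = ∑ k ∈ S, pairF f (g k) := by
  simp only [aux_pairF_eq]
  exact map_sum _ _ _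

lemma aux_sigRev_zero_ne (f : ℝ → α → ℝ) {z : Word α} (h : z ≠ []) :
    sigRev f z 0 = 0 := by
  cases z with
  | nil => exact absurd rfl h
  | cons a w => simp [sigRev]

lemma aux_sigUpTo_zero_ne (Y : RawPath α) {w : Word α} (h : w ≠ []) :
    sigUpTo Y 0 w = 0 := by
  rw [sigUpTo, aux_sigRev_zero_ne]
  simpa using h

lemma aux_pairF_sigZero (Y : RawPath α) (x : TA α) (hx : x [] = 0) :
    pairF (sigUpTo Y 0) x = 0 := by
  rw [pairF, Finsupp.sum]
  apply Finset.sum_eq_zero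
  intro w hw
  rcases eq_or_ne w [] with rfl | hne
  · rw [Finsupp.mem_support_iff] at hw; exact absurd hx hw
  · rw [aux_sigUpTo_zero_ne Y hne, mul_zero]

lemma aux_sigUpTo_concat_chen (X Y : RawPath α) (hX : IsPath X) (hY : IsPath Y)
    {s : ℝ} (hs : s ∈ Set.Icc X.T (X.T + Y.T)) (w : Word α) :
    sigUpTo (concat X Y) s w =
      ∑ k ∈ Finset.range (w.length + 1),
        sig X (w.take k) * sigUpTo Y (s - X.T) (w.drop k) := by
  have h := aux_sigRev_concat_chen X Y hX hY w.reverse s hs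
  rw [sigUpTo, h, List.length_reverse]
  rw [← Finset.sum_range_reflect]
  refine Finset.sum_congr rfl fun k hk => ?_
  rw [Finset.mem_range] at hk
  have e : w.length + 1 - 1 - k = w.length - k := rfl
  rw [e]
  simp only [sig, sigUpTo]
  rw [show w.reverse.take (w.length - k) = (w.drop k).reverse from List.reverse_drop.symm,
    show w.reverse.drop (w.length - k) = (w.take k).reverse from List.reverse_take.symm]
  ring

end Aux

/-- `Λ_B^*(X ⊔ Y) = (Λ_B^* X) ⊔ (Λ_{δ_X B}^* Y)` as paths in `ℝ^t`,
where `δ_X B(i) = B(i) + Σ' ⟨σ(X), u⟩·v` summed over the splittings of `B(i)` into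
nonempty prefix `u` and nonempty suffix `v`. -/
theorem statement13 {t n : ℕ} (B : Fin t → TA (Fin n)) (hB : ∀ j, (B j) [] = 0)
    (X Y : RawPath (Fin n)) (hX : IsPath X) (hY : IsPath Y)
    (hX0 : ∀ i, X.toFun 0 i = 0) (hY0 : ∀ i, Y.toFun 0 i = 0) :
    (⟨(concat X Y).T, fun s j => pairF (sigUpTo (concat X Y) s) (B j)⟩ :
        RawPath (Fin t)).T =
      (concat
        (⟨X.T, fun s j => pairF (sigUpTo X s) (B j)⟩ : RawPath (Fin t))
        (⟨Y.T, fun s j => pairF (sigUpTo Y s)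
          (B j + (B j).sum fun w c => c • ∑ k ∈ Finset.Ioo 0 w.length,
            sig X (w.take k) • Finsupp.single (w.drop k) (1 : ℝ))⟩ :
          RawPath (Fin t))).T ∧
    ∀ s ∈ Set.Icc (0 : ℝ) (X.T + Y.T), ∀ j : Fin t,
      (⟨(concat X Y).T, fun u j' => pairF (sigUpTo (concat X Y) u) (B j')⟩ :
          RawPath (Fin t)).toFun s j =
        (concat
          (⟨X.T, fun u j' => pairF (sigUpTo X u) (B j')⟩ : RawPath (Fin t))
          (⟨Y.T, fun u j' => pairF (sigUpTo Y u)
            (B j' + (B j').sum fun w c => c • ∑ k ∈ Finset.Ioo 0 w.length,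
              sig X (w.take k) • Finsupp.single (w.drop k) (1 : ℝ))⟩ :
            RawPath (Fin t))).toFun s j := by
  have hT1 : (0:ℝ) < X.T := hX.1
  have hT2 : (0:ℝ) < Y.T := hY.1
  constructor
  · rfl
  intro s hs j
  show pairF (sigUpTo (concat X Y) s) (B j) = _
  conv_rhs => simp only [concat]
  by_cases hsX : s ≤ X.T
  · rw [if_pos hsX]
    have hfun : sigUpTo (concat X Y) s = sigUpTo X s := funext fun w =>
      aux_sigRev_concat_left X Y hT1.le w.reverse s ⟨hs.1, hsX⟩
    rw [hfun]
  · rw [if_neg hsX]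
    have hsX' : X.T < s := not_le.mp hsX
    have hsmem : s ∈ Set.Icc X.T (X.T + Y.T) := ⟨hsX'.le, hs.2⟩
    set corr : TA (Fin n) := (B j).sum fun w c => c • ∑ k ∈ Finset.Ioo 0 w.length,
      sig X (w.take k) • Finsupp.single (w.drop k) (1:ℝ) with hcorr
    have hcorr0 : corr [] = 0 := by
      rw [hcorr, Finsupp.sum_apply, Finsupp.sum]
      apply Finset.sum_eq_zero
      intro w _
      rw [Finsupp.smul_apply]
      have hz : (∑ k ∈ Finset.Ioo 0 w.length,
          sig X (w.take k) • Finsupp.single (w.drop k) (1:ℝ)) [] = 0 := by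
        rw [Finsupp.finset_sum_apply]
        apply Finset.sum_eq_zero
        intro k hk
        rw [Finset.mem_Ioo] at hk
        have hne : ¬ (w.drop k = []) := by
          intro hnil
          have := (List.length_drop : (w.drop k).length = w.length - k) ▸ congrArg List.length hnil
          simp at this
          omega
        rw [Finsupp.smul_apply, Finsupp.single_apply, if_neg hne, smul_zero]
      rw [hz, smul_zero]
    have h0 : pairF (sigUpTo Y 0) (B j + corr) = 0 := by
      apply aux_pairF_sigZero
      rw [Finsupp.add_apply, hB j, hcorr0, add_zero]
    rw [h0, sub_zero, aux_pairF_add]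
    have hc : pairF (sigUpTo Y (s - X.T)) corr = (B j).sum fun w c =>
        c * ∑ k ∈ Finset.Ioo 0 w.length,
          sig X (w.take k) * sigUpTo Y (s - X.T) (w.drop k) := by
      rw [hcorr, aux_pairF_finsupp_sum]
      refine Finsupp.sum_congr fun w _ => ?_
      rw [aux_pairF_smul]
      congr 1
      rw [aux_pairF_finset_sum]
      refine Finset.sum_congr rfl fun k _ => ?_
      rw [aux_pairF_smul, aux_pairF_single, one_mul]
    rw [hc]
    have hchen : ∀ w : Word (Fin n), sigUpTo (concat X Y) s w =
        ∑ k ∈ Finset.range (w.length + 1),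
          sig X (w.take k) * sigUpTo Y (s - X.T) (w.drop k) :=
      fun w => aux_sigUpTo_concat_chen X Y hX hY hsmem w
    simp only [pairF, Finsupp.sum]
    rw [← Finset.sum_add_distrib, ← Finset.sum_add_distrib]
    refine Finset.sum_congr rfl fun w hw => ?_
    have hwne : w ≠ [] := by
      intro h
      rw [Finsupp.mem_support_iff, h, hB j] at hw
      exact hw rfl
    rw [hchen w]
    have hm : 1 ≤ w.length := by
      cases w with
      | nil => exact absurd rfl hwne
      | cons a w' => simp
    have hsplit : Finset.range (w.length + 1) =
        insert 0 (insert w.length (Finset.Ioo 0 w.length)) := by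
      ext k
      simp only [Finset.mem_range, Finset.mem_insert, Finset.mem_Ioo]
      omega
    have h0ni : (0:ℕ) ∉ insert w.length (Finset.Ioo 0 w.length) := by
      simp only [Finset.mem_insert, Finset.mem_Ioo]
      omega
    have hlni : w.length ∉ Finset.Ioo 0 w.length := by
      simp
    rw [hsplit, Finset.sum_insert h0ni, Finset.sum_insert hlni]
    simp only [List.take_zero, List.drop_zero, List.take_length, List.drop_length]
    rw [show sig X ([] : Word (Fin n)) = 1 by simp [sig, sigUpTo, sigRev],
      show sigUpTo Y (s - X.T) ([] : Word (Fin n)) = 1 by simp [sigUpTo, sigRev],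
      show sigUpTo X X.T w = sig X w from rfl]
    ring

end PathVarieties
end

section
/- Let F, G be maps from paths in ℝ^d (started at 0) to paths in ℝ^t (started at 0) that are regular, i.e. there are linear maps H₁, H₂ : T(ℝ^t) → T(ℝ^d) with ⟨σ(F(X)), x⟩ = ⟨σ(X), H₁x⟩ and ⟨σ(G(X)), x⟩ = ⟨σ(X), H₂x⟩ for all paths X and x ∈ T(ℝ^t). Then the map X ↦ F(X) ⊔ G(X) is regular, with corresponding linear map x ↦ Σ_{x=uv} H₁(u) ⧢ H₂(v), where the sum runs over all deconcatenation splittings of x into prefix u and suffix v: ⟨σ(F(X)⊔G(X)), x⟩ = ⟨σ(X), Σ_{x=uv} H₁(u) ⧢ H₂(v)⟩ for all X and x. -/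
open scoped BigOperators TensorProduct

namespace PathVarieties

section Comb
variable {α : Type*}

lemma shuffles_nil_left (v : Word α) : shuffles [] v = [v] := by
  rw [shuffles]

lemma shuffles_nil_right (u : Word α) : shuffles u [] = [u] := by
  cases u with
  | nil => rw [shuffles]
  | cons a u => rw [shuffles]

lemma shuffles_cons_cons (a b : α) (u v : Word α) :
    shuffles (a :: u) (b :: v) =
      ((shuffles u (b :: v)).map (a :: ·)) ++ ((shuffles (a :: u) v).map (b :: ·)) := by
  rw [shuffles]

lemma mem_shuffles_cons_cons {a b : α} {u v w : Word α}
    (h : w ∈ shuffles (a :: u) (b :: v)) :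
    (∃ w', w = a :: w') ∨ (∃ w', w = b :: w') := by
  rw [shuffles_cons_cons] at h
  rcases List.mem_append.1 h with h | h <;> rcases List.mem_map.1 h with ⟨w', _, rfl⟩
  · exact Or.inl ⟨w', rfl⟩
  · exact Or.inr ⟨w', rfl⟩

/-- mirrored recursion for `shuffles`, as multisets -/
lemma shuffles_concat_multiset :
    ∀ (N : ℕ) (u v : Word α) (a b : α), u.length + v.length ≤ N →
      (shuffles (u ++ [a]) (v ++ [b]) : Multiset (Word α)) =
        ((shuffles u (v ++ [b]) : Multiset (Word α))).map (· ++ [a]) +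
          ((shuffles (u ++ [a]) v : Multiset (Word α))).map (· ++ [b]) := by
  have base : ∀ a b : α, (shuffles ([] ++ [a]) ([] ++ [b]) : Multiset (Word α)) =
      ((shuffles [] ([] ++ [b]) : Multiset (Word α))).map (· ++ [a]) +
        ((shuffles ([] ++ [a]) [] : Multiset (Word α))).map (· ++ [b]) := by
    intro a b
    simp only [List.nil_append, shuffles_nil_left, shuffles_nil_right, shuffles_cons_cons,
      List.map, Multiset.map_coe, ← Multiset.coe_add]
    exact Multiset.coe_eq_coe.mpr (by simp; exact List.Perm.swap _ _ _)
  intro N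
  induction N with
  | zero =>
    intro u v a b h
    have hu : u = [] := List.length_eq_zero_iff.1 (by omega)
    have hv : v = [] := List.length_eq_zero_iff.1 (by omega)
    subst hu; subst hv; exact base a b
  | succ N ih =>
    intro u v a b h
    match u, v with
    | [], [] => exact base a b
    | [], d :: v' =>
      have h2 := ih [] v' a b (by simp at h ⊢; omega)
      simp only [List.nil_append, List.cons_append] at h2 ⊢
      simp only [shuffles_cons_cons, shuffles_nil_left, shuffles_nil_right] at h2 ⊢
      simp only [← Multiset.coe_add, ← Multiset.map_coe, Multiset.map_map, Function.comp,
        Multiset.map_add, ← Multiset.cons_coe, Multiset.map_cons, Multiset.coe_nil,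
        Multiset.map_zero, add_zero, zero_add, ← Multiset.singleton_add,
        Multiset.map_singleton] at h2 ⊢
      rw [h2]
      simp only [Multiset.map_add, Multiset.map_map, Function.comp, Multiset.map_singleton,
        List.cons_append, List.append_assoc, List.nil_append]
      abel
    | c :: u', [] =>
      have h2 := ih u' [] a b (by simp at h ⊢; omega)
      simp only [List.nil_append, List.cons_append, List.append_nil] at h2 ⊢
      simp only [shuffles_cons_cons, shuffles_nil_left, shuffles_nil_right] at h2 ⊢
      simp only [← Multiset.coe_add, ← Multiset.map_coe, Multiset.map_map, Function.comp,
        Multiset.map_add, ← Multiset.cons_coe, Multiset.map_cons, Multiset.coe_nil,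
        Multiset.map_zero, add_zero, zero_add, ← Multiset.singleton_add,
        Multiset.map_singleton] at h2 ⊢
      rw [h2]
      simp only [Multiset.map_add, Multiset.map_map, Function.comp, Multiset.map_singleton,
        List.cons_append, List.append_assoc, List.nil_append]
      abel
    | c :: u', d :: v' =>
      have h2 := ih u' (d :: v') a b (by simp at h ⊢; omega)
      have h3 := ih (c :: u') v' a b (by simp at h ⊢; omega)
      simp only [List.nil_append, List.cons_append, List.append_nil] at h2 h3 ⊢
      simp only [shuffles_cons_cons, shuffles_nil_left, shuffles_nil_right] at h2 h3 ⊢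
      simp only [← Multiset.coe_add, ← Multiset.map_coe, Multiset.map_map, Function.comp,
        Multiset.map_add, ← Multiset.cons_coe, Multiset.map_cons, Multiset.coe_nil,
        Multiset.map_zero, add_zero, zero_add, ← Multiset.singleton_add,
        Multiset.map_singleton] at h2 h3 ⊢
      rw [h2, h3]
      simp only [Multiset.map_add, Multiset.map_map, Function.comp, Multiset.map_singleton,
        List.cons_append, List.append_assoc, List.nil_append]
      abel

lemma shuffles_reverse_multiset :
    ∀ (N : ℕ) (u v : Word α), u.length + v.length ≤ N →
      ((shuffles u v : Multiset (Word α))).map List.reverse =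
        (shuffles u.reverse v.reverse : Multiset (Word α)) := by
  intro N
  induction N with
  | zero =>
    intro u v h
    have hu : u = [] := List.length_eq_zero_iff.1 (by omega)
    have hv : v = [] := List.length_eq_zero_iff.1 (by omega)
    subst hu; subst hv
    simp [shuffles_nil_left]
  | succ N ih =>
    intro u v h
    match u, v with
    | [], v => simp [shuffles_nil_left]
    | a :: u', [] => simp [shuffles_nil_left, shuffles_nil_right]
    | a :: u', b :: v' =>
      rw [shuffles_cons_cons]
      have h2 := ih u' (b :: v') (by simp at h ⊢; omega)
      have h3 := ih (a :: u') v' (by simp at h ⊢; omega)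
      simp only [← Multiset.coe_add, ← Multiset.map_coe, Multiset.map_map, Function.comp,
        Multiset.map_add]
      rw [show (fun w : Word α => (a :: w).reverse) = (fun w => w.reverse ++ [a]) from by
            funext w; simp,
          show (fun w : Word α => (b :: w).reverse) = (fun w => w.reverse ++ [b]) from by
            funext w; simp]
      rw [show ((shuffles u' (b :: v') : Multiset (Word α))).map (fun w => w.reverse ++ [a])
            = (((shuffles u' (b :: v') : Multiset (Word α))).map List.reverse).map (· ++ [a]) from by
            rw [Multiset.map_map]; rfl,
          show ((shuffles (a :: u') v' : Multiset (Word α))).map (fun w => w.reverse ++ [b])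
            = (((shuffles (a :: u') v' : Multiset (Word α))).map List.reverse).map (· ++ [b]) from by
            rw [Multiset.map_map]; rfl]
      rw [h2, h3]
      simp only [List.reverse_cons]
      rw [← shuffles_concat_multiset (u'.reverse.length + v'.reverse.length)
        u'.reverse v'.reverse a b le_rfl]

end Comb

section Analysis
open MeasureTheory intervalIntegral Set

variable {α : Type*}

/-- The (pointwise) derivative of the `i`-th coordinate of a raw path. -/
noncomputable def pd (X : RawPath α) (i : α) : ℝ → ℝ := deriv fun u => X.toFun u i

lemma sigRev_nil (X : ℝ → α → ℝ) (s : ℝ) : sigRev X [] s = 1 := rfl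

lemma sigRev_cons (X : ℝ → α → ℝ) (i : α) (w : Word α) (s : ℝ) :
    sigRev X (i :: w) s = ∫ r in (0:ℝ)..s, sigRev X w r * deriv (fun u => X u i) r := rfl

lemma sigRev_cons' (X : RawPath α) (i : α) (w : Word α) (s : ℝ) :
    sigRev X.toFun (i :: w) s = ∫ r in (0:ℝ)..s, sigRev X.toFun w r * pd X i r := rfl

lemma sigRev_cons_zero (X : ℝ → α → ℝ) (i : α) (w : Word α) : sigRev X (i :: w) 0 = 0 := by
  rw [sigRev_cons, intervalIntegral.integral_same]

lemma ae_ne_point (c : ℝ) : ∀ᵐ x : ℝ, x ≠ c := by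
  refine MeasureTheory.ae_iff.2 ?_
  have h : {x : ℝ | ¬ x ≠ c} = {c} := by ext x; simp
  rw [h]
  exact measure_singleton c

lemma isPath_good {X : RawPath α} (hX : IsPath X) :
    ∃ E : Set ℝ, E.Countable ∧
      (∀ i, ∀ a ∈ Icc (0:ℝ) X.T, ∀ b ∈ Icc (0:ℝ) X.T,
        IntervalIntegrable (pd X i) volume a b) ∧
      (∀ t ∈ Icc (0:ℝ) X.T \ E, ∃ U, IsOpen U ∧ t ∈ U ∧ U ⊆ Icc (0:ℝ) X.T ∧
        ∀ i, ContinuousOn (pd X i) U) := by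
  obtain ⟨hT, hc, n, τ, hmono, h0, hlast, hC1⟩ := hX
  have hτmem : ∀ j : Fin (n+1), τ j ∈ Icc (0:ℝ) X.T := fun j =>
    ⟨h0 ▸ hmono.monotone (Fin.zero_le j), hlast ▸ hmono.monotone (Fin.le_last j)⟩
  refine ⟨Set.range τ, (Set.finite_range τ).countable, ?_, ?_⟩
  · -- integrability
    have piece : ∀ (i : α) (k : Fin n),
        IntervalIntegrable (pd X i) volume (τ k.castSucc) (τ k.succ) := by
      intro i k
      have hab : τ k.castSucc < τ k.succ := hmono (Fin.castSucc_lt_succ (i := k))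
      set f := fun u => X.toFun u i with hf
      set g := derivWithin f (Icc (τ k.castSucc) (τ k.succ)) with hg
      have hcd : ContinuousOn g (Icc (τ k.castSucc) (τ k.succ)) :=
        (hC1 k i).continuousOn_derivWithin (uniqueDiffOn_Icc hab) le_rfl
      have hig : IntegrableOn g (Ioc (τ k.castSucc) (τ k.succ)) volume :=
        (hcd.integrableOn_Icc).mono_set Ioc_subset_Icc_self
      rw [intervalIntegrable_iff_integrableOn_Ioc_of_le hab.le]
      refine hig.congr ?_
      rw [Filter.EventuallyEq, MeasureTheory.ae_restrict_iff' measurableSet_Ioc]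
      filter_upwards [ae_ne_point (τ k.succ)] with x hx hmem
      have hxo : x ∈ Ioo (τ k.castSucc) (τ k.succ) := ⟨hmem.1, lt_of_le_of_ne hmem.2 hx⟩
      exact derivWithin_of_mem_nhds (Icc_mem_nhds hxo.1 hxo.2)
    intro i a ha b hb
    have glue : ∀ j : Fin (n+1), IntervalIntegrable (pd X i) volume 0 (τ j) := by
      intro j
      induction j using Fin.induction with
      | zero => rw [h0]
      | succ k ihk => exact ihk.trans (piece i k)
    have h0T : IntervalIntegrable (pd X i) volume 0 X.T := by
      have := glue (Fin.last n); rwa [hlast] at this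
    refine h0T.mono_set (Set.uIcc_subset_uIcc ?_ ?_) <;>
      rw [Set.uIcc_of_le hT.le] <;> assumption
  · -- continuity of the derivative off the partition points
    intro t ht
    obtain ⟨⟨ht0, htT⟩, htE⟩ := ht
    have h0t : (0:ℝ) < t := lt_of_le_of_ne ht0 (by rintro rfl; exact htE ⟨0, h0⟩)
    have htT' : t < X.T := lt_of_le_of_ne htT fun hh => htE ⟨Fin.last n, hlast.trans hh.symm⟩
    set s := Finset.univ.filter (fun j : Fin (n+1) => τ j < t) with hsdef
    have hsne : s.Nonempty := ⟨0, by simp [hsdef, h0, h0t]⟩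
    set k' := s.max' hsne with hk'def
    have hk'lt : τ k' < t := (Finset.mem_filter.1 (s.max'_mem hsne)).2
    have hk'ne : k' ≠ Fin.last n := by
      intro hh; rw [hh, hlast] at hk'lt; linarith
    have hk'val : (k' : ℕ) < n := by
      have := Fin.val_lt_last hk'ne; omega
    set k : Fin n := ⟨k', hk'val⟩ with hkdef
    have hcs : k.castSucc = k' := rfl
    have hlt2 : t < τ k.succ := by
      by_contra hh
      push_neg at hh
      have hne : τ k.succ ≠ t := fun hh2 => htE ⟨k.succ, hh2⟩
      have hmem : k.succ ∈ s := Finset.mem_filter.2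
        ⟨Finset.mem_univ _, lt_of_le_of_ne hh hne⟩
      have hle := Finset.le_max' s _ hmem
      have h2 : k' < k.succ := hcs ▸ Fin.castSucc_lt_succ (i := k)
      exact absurd hle (not_le.2 h2)
    refine ⟨Ioo (τ k.castSucc) (τ k.succ), isOpen_Ioo, ⟨hcs ▸ hk'lt, hlt2⟩, ?_, ?_⟩
    · exact fun x hx => ⟨le_trans (hτmem k.castSucc).1 hx.1.le,
        le_trans hx.2.le (hτmem k.succ).2⟩
    · intro i
      have h1 : ContDiffOn ℝ 1 (fun u => X.toFun u i) (Ioo (τ k.castSucc) (τ k.succ)) :=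
        (hC1 k i).mono Ioo_subset_Icc_self
      exact h1.continuousOn_deriv_of_isOpen isOpen_Ioo le_rfl

lemma pd_intervalIntegrable {X : RawPath α} (hX : IsPath X) (i : α) {a b : ℝ}
    (ha : a ∈ Icc (0:ℝ) X.T) (hb : b ∈ Icc (0:ℝ) X.T) :
    IntervalIntegrable (pd X i) volume a b := by
  obtain ⟨E, _, hint, _⟩ := isPath_good hX
  exact hint i a ha b hb

lemma mul_pd_intervalIntegrable {X : RawPath α} (hX : IsPath X) {g : ℝ → ℝ}
    (hg : ContinuousOn g (Icc (0:ℝ) X.T)) (i : α) {a b : ℝ}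
    (ha : a ∈ Icc (0:ℝ) X.T) (hb : b ∈ Icc (0:ℝ) X.T) :
    IntervalIntegrable (fun s => g s * pd X i s) volume a b := by
  have h1 := pd_intervalIntegrable hX i ha hb
  have hsub : Set.uIcc a b ⊆ Icc (0:ℝ) X.T := by
    rw [← Set.uIcc_of_le hX.1.le]
    exact Set.uIcc_subset_uIcc (by rwa [Set.uIcc_of_le hX.1.le]) (by rwa [Set.uIcc_of_le hX.1.le])
  exact h1.continuousOn_mul (hg.mono hsub)

lemma sigRev_continuousOn {X : RawPath α} (hX : IsPath X) (w : Word α) :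
    ContinuousOn (fun s => sigRev X.toFun w s) (Icc (0:ℝ) X.T) := by
  induction w with
  | nil => simpa [sigRev_nil] using continuousOn_const
  | cons i w ih =>
    have hint : IntervalIntegrable (fun s => sigRev X.toFun w s * pd X i s) volume 0 X.T :=
      mul_pd_intervalIntegrable hX ih i (left_mem_Icc.2 hX.1.le) (right_mem_Icc.2 hX.1.le)
    have := intervalIntegral.continuousOn_primitive_interval' hint
      (left_mem_uIcc : (0:ℝ) ∈ Set.uIcc 0 X.T)
    rw [Set.uIcc_of_le hX.1.le] at this
    exact this.congr fun s _ => (sigRev_cons' X i w s)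

lemma list_hasDerivAt {ι : Type*} (L : List ι) (F : ι → ℝ → ℝ) (F' : ι → ℝ) (t : ℝ)
    (h : ∀ w ∈ L, HasDerivAt (F w) (F' w) t) :
    HasDerivAt (fun s => (L.map (F · s)).sum) ((L.map F').sum) t := by
  induction L with
  | nil => simpa using hasDerivAt_const t (0:ℝ)
  | cons x L ih =>
    simp only [List.map_cons, List.sum_cons]
    exact (h x List.mem_cons_self).add (ih fun w hw => h w (List.mem_cons_of_mem x hw))

lemma list_continuousOn {ι : Type*} (L : List ι) (F : ι → ℝ → ℝ) (s : Set ℝ)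
    (h : ∀ w ∈ L, ContinuousOn (F w) s) :
    ContinuousOn (fun t => (L.map (F · t)).sum) s := by
  induction L with
  | nil => simpa using continuousOn_const
  | cons x L ih =>
    simp only [List.map_cons, List.sum_cons]
    exact (h x List.mem_cons_self).add (ih fun w hw => h w (List.mem_cons_of_mem x hw))

end Analysis

section Shuffle
open MeasureTheory intervalIntegral Set

variable {α : Type*}

theorem shuffle_pointwise {X : RawPath α} (hX : IsPath X) :
    ∀ (u v : Word α) (t : ℝ), t ∈ Icc (0:ℝ) X.T →
      sigRev X.toFun u t * sigRev X.toFun v t =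
        ((shuffles u v).map (fun w => sigRev X.toFun w t)).sum := by
  obtain ⟨E, hEc, hint, hnbhd⟩ := isPath_good hX
  have hT := hX.1
  have hS := fun w => sigRev_continuousOn hX w
  -- derivative of an iterated integral at a good point
  have hder : ∀ (w : Word α) (i : α) (s : ℝ), s ∈ Icc (0:ℝ) X.T \ E →
      HasDerivAt (fun r => sigRev X.toFun (i :: w) r) (sigRev X.toFun w s * pd X i s) s := by
    intro w i s hs
    obtain ⟨U, hUo, hsU, hUsub, hUc⟩ := hnbhd s hs
    have hcw : ContinuousOn (fun r => sigRev X.toFun w r * pd X i r) U :=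
      ((hS w).mono hUsub).mul (hUc i)
    have h1 : HasDerivAt (fun r => ∫ x in (0:ℝ)..r, sigRev X.toFun w x * pd X i x)
        (sigRev X.toFun w s * pd X i s) s :=
      intervalIntegral.integral_hasDerivAt_right
        (mul_pd_intervalIntegrable hX (hS w) i (left_mem_Icc.2 hT.le) hs.1)
        (hcw.stronglyMeasurableAtFilter hUo s hsU)
        (hcw.continuousAt (hUo.mem_nhds hsU))
    exact h1.congr_of_eventuallyEq (Filter.Eventually.of_forall fun r => (sigRev_cons' X i w r))
  -- FTC principle
  have ftc : ∀ (f φ : ℝ → ℝ) (t : ℝ), t ∈ Icc (0:ℝ) X.T →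
      ContinuousOn f (Icc (0:ℝ) X.T) →
      (∀ x ∈ Icc (0:ℝ) X.T \ E, HasDerivAt f (φ x) x) →
      IntervalIntegrable φ volume 0 t →
      f t = f 0 + ∫ x in (0:ℝ)..t, φ x := by
    intro f φ t ht hfc hfd hφ
    have := MeasureTheory.integral_eq_of_hasDerivAt_off_countable_of_le f φ ht.1 hEc
      (hfc.mono (Icc_subset_Icc le_rfl ht.2))
      (fun x hx => hfd x ⟨⟨hx.1.1.le, hx.1.2.le.trans ht.2⟩, hx.2⟩)
      hφ
    linarith [this]
  -- main induction
  have main : ∀ (N : ℕ) (u v : Word α), u.length + v.length ≤ N → ∀ t ∈ Icc (0:ℝ) X.T,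
      sigRev X.toFun u t * sigRev X.toFun v t =
        ((shuffles u v).map (fun w => sigRev X.toFun w t)).sum := by
    intro N
    induction N with
    | zero =>
      intro u v h t ht
      have hu : u = [] := List.length_eq_zero_iff.1 (by omega)
      have hv : v = [] := List.length_eq_zero_iff.1 (by omega)
      subst hu; subst hv
      simp [shuffles_nil_left, sigRev_nil]
    | succ N ih =>
      intro u v h t ht
      match u, v with
      | [], v => simp [shuffles_nil_left, sigRev_nil]
      | a :: u', [] => simp [shuffles_nil_right, sigRev_nil]
      | a :: u', b :: v' =>
        set S := fun (w : Word α) (s : ℝ) => sigRev X.toFun w s with hSdef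
        have hlen1 : u'.length + (b :: v').length ≤ N := by simp at h ⊢; omega
        have hlen2 : (a :: u').length + v'.length ≤ N := by simp at h ⊢; omega
        set A := shuffles u' (b :: v') with hA
        set B := shuffles (a :: u') v' with hB
        set φ : ℝ → ℝ := fun s =>
          S u' s * pd X a s * S (b :: v') s + S (a :: u') s * (S v' s * pd X b s) with hφdef
        have hφint : ∀ r ∈ Icc (0:ℝ) X.T, IntervalIntegrable φ volume 0 r := by
          intro r hr
          have h1 : IntervalIntegrable (fun s => (S u' s * S (b :: v') s) * pd X a s)
              volume 0 r := mul_pd_intervalIntegrable hX ((hS u').mul (hS (b :: v'))) a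
            (left_mem_Icc.2 hT.le) hr
          have h2 : IntervalIntegrable (fun s => (S (a :: u') s * S v' s) * pd X b s)
              volume 0 r := mul_pd_intervalIntegrable hX ((hS (a :: u')).mul (hS v')) b
            (left_mem_Icc.2 hT.le) hr
          refine (h1.add h2).congr_ae (Filter.Eventually.of_forall fun s => ?_)
          simp only [hφdef, Pi.add_apply]
          ring
        -- LHS
        have hfc : ContinuousOn (fun s => S (a :: u') s * S (b :: v') s) (Icc (0:ℝ) X.T) :=
          (hS _).mul (hS _)
        have hfd : ∀ x ∈ Icc (0:ℝ) X.T \ E,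
            HasDerivAt (fun s => S (a :: u') s * S (b :: v') s) (φ x) x := by
          intro x hx
          exact (hder u' a x hx).mul (hder v' b x hx)
        have hlhs := ftc _ φ t ht hfc hfd (hφint t ht)
        -- RHS
        have hgc : ContinuousOn (fun s => ((shuffles (a :: u') (b :: v')).map
            (fun w => S w s)).sum) (Icc (0:ℝ) X.T) :=
          list_continuousOn _ _ _ fun w _ => hS w
        have hgd : ∀ x ∈ Icc (0:ℝ) X.T \ E,
            HasDerivAt (fun s => ((shuffles (a :: u') (b :: v')).map
              (fun w => S w s)).sum) (φ x) x := by
          intro x hx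
          have hda : HasDerivAt (fun s => (A.map (fun w => S (a :: w) s)).sum)
              ((A.map (fun w => S w x * pd X a x)).sum) x :=
            list_hasDerivAt A (fun w s => S (a :: w) s) _ x fun w _ => hder w a x hx
          have hdb : HasDerivAt (fun s => (B.map (fun w => S (b :: w) s)).sum)
              ((B.map (fun w => S w x * pd X b x)).sum) x :=
            list_hasDerivAt B (fun w s => S (b :: w) s) _ x fun w _ => hder w b x hx
          have hsum := hda.add hdb
          have hfun : (fun s => ((shuffles (a :: u') (b :: v')).map (fun w => S w s)).sum)
              = (fun s => (A.map (fun w => S (a :: w) s)).sum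
                + (B.map (fun w => S (b :: w) s)).sum) := by
            funext s
            rw [shuffles_cons_cons, List.map_append, List.sum_append,
              List.map_map, List.map_map]
            rfl
          rw [hfun]
          refine hsum.congr_deriv ?_
          rw [List.sum_map_mul_right, List.sum_map_mul_right,
            ← ih u' (b :: v') hlen1 x hx.1, ← ih (a :: u') v' hlen2 x hx.1]
          simp only [hφdef]
          ring
        have hrhs := ftc _ φ t ht hgc hgd (hφint t ht)
        -- values at 0
        have hl0 : S (a :: u') 0 * S (b :: v') 0 = 0 := by
          simp [hSdef, sigRev_cons_zero]
        have hr0 : ((shuffles (a :: u') (b :: v')).map (fun w => S w 0)).sum = 0 := by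
          apply List.sum_eq_zero
          intro x hx
          obtain ⟨w, hw, rfl⟩ := List.mem_map.1 hx
          rcases mem_shuffles_cons_cons hw with ⟨w', rfl⟩ | ⟨w', rfl⟩ <;>
            simp [hSdef, sigRev_cons_zero]
        rw [hlhs, hrhs, hl0, hr0]
  intro u v t ht
  exact main (u.length + v.length) u v le_rfl t ht

end Shuffle

section Chen
open MeasureTheory intervalIntegral Set

variable {α : Type*} {P Q : RawPath α}

lemma concat_T : (concat P Q).T = P.T + Q.T := rfl

lemma pd_concat_left (i : α) {s : ℝ} (hs : s < P.T) :
    pd (concat P Q) i s = pd P i s := by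
  refine Filter.EventuallyEq.deriv_eq ?_
  filter_upwards [Iio_mem_nhds hs] with u hu
  rw [Set.mem_Iio] at hu
  simp only [concat, if_pos hu.le]

lemma pd_concat_right (i : α) {s : ℝ} (hs : P.T < s) :
    pd (concat P Q) i s = pd Q i (s - P.T) := by
  have heq : (fun u => (concat P Q).toFun u i)
      =ᶠ[nhds s] (fun u => Q.toFun (u - P.T) i + (P.toFun P.T i - Q.toFun 0 i)) := by
    filter_upwards [Ioi_mem_nhds hs] with u hu
    rw [Set.mem_Ioi] at hu
    simp only [concat, if_neg (not_le.2 hu)]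
    ring
  have h1 : pd (concat P Q) i s
      = deriv (fun u => Q.toFun (u - P.T) i + (P.toFun P.T i - Q.toFun 0 i)) s :=
    Filter.EventuallyEq.deriv_eq heq
  rw [h1, deriv_add_const]
  exact deriv_comp_sub_const (f := fun r => Q.toFun r i) (a := P.T) (x := s)

lemma sigRev_concat_left (hP : IsPath P) :
    ∀ (w : Word α) (s : ℝ), s ∈ Icc (0:ℝ) P.T →
      sigRev (concat P Q).toFun w s = sigRev P.toFun w s := by
  intro w
  induction w with
  | nil => intro s _; rfl
  | cons i w ih =>
    intro s hs
    rw [sigRev_cons' (concat P Q) i w s, sigRev_cons' P i w s]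
    refine intervalIntegral.integral_congr_ae ?_
    filter_upwards [ae_ne_point P.T] with x hx hmem
    rw [Set.uIoc_of_le hs.1] at hmem
    have hxlt : x < P.T := lt_of_le_of_ne (hmem.2.trans hs.2) hx
    rw [ih x ⟨hmem.1.le, hxlt.le⟩, pd_concat_left i hxlt]

set_option maxHeartbeats 1000000 in
lemma chen_aux (hP : IsPath P) (hQ : IsPath Q) :
    ∀ (w : Word α) (t : ℝ), t ∈ Icc (0:ℝ) Q.T →
      sigRev (concat P Q).toFun w.reverse (P.T + t) =
        ∑ k ∈ Finset.range (w.length + 1),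
          sig P (w.take k) * sigRev Q.toFun (w.drop k).reverse t := by
  intro w
  induction w using List.reverseRecOn with
  | nil =>
    intro t ht
    simp [sigRev_nil, sig, sigUpTo, List.reverse_nil]
  | append_singleton w i ih =>
    intro t ht
    have hT1 : (0:ℝ) ≤ P.T := hP.1.le
    have hT1mem : P.T ∈ Icc (0:ℝ) P.T := right_mem_Icc.2 hT1
    have h0P : (0:ℝ) ∈ Icc (0:ℝ) P.T := left_mem_Icc.2 hT1
    have h0Q : (0:ℝ) ∈ Icc (0:ℝ) Q.T := left_mem_Icc.2 hQ.1.le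
    -- ae equality on the first piece
    have haeP : ∀ᵐ x : ℝ, x ∈ Set.uIoc (0:ℝ) P.T →
        sigRev P.toFun w.reverse x * pd P i x
          = sigRev (concat P Q).toFun w.reverse x * pd (concat P Q) i x := by
      filter_upwards [ae_ne_point P.T] with x hx hmem
      rw [Set.uIoc_of_le hT1] at hmem
      have hxlt : x < P.T := lt_of_le_of_ne hmem.2 hx
      rw [sigRev_concat_left hP w.reverse x ⟨hmem.1.le, hxlt.le⟩, pd_concat_left i hxlt]
    have hfPint : IntervalIntegrable
        (fun s => sigRev P.toFun w.reverse s * pd P i s) volume 0 P.T :=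
      mul_pd_intervalIntegrable hP (sigRev_continuousOn hP _) i h0P hT1mem
    have hfint1 : IntervalIntegrable
        (fun s => sigRev (concat P Q).toFun w.reverse s * pd (concat P Q) i s) volume 0 P.T := by
      refine hfPint.congr_ae ?_
      rw [Filter.EventuallyEq, MeasureTheory.ae_restrict_iff' measurableSet_uIoc]
      exact haeP
    -- the second piece
    have hterm : ∀ k : ℕ, IntervalIntegrable
        (fun r => sig P (w.take k) * (sigRev Q.toFun (w.drop k).reverse r * pd Q i r))
        volume 0 t :=
      fun k => (mul_pd_intervalIntegrable hQ (sigRev_continuousOn hQ _) i h0Q ht).const_mul _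
    have hFint : IntervalIntegrable (fun r => ∑ k ∈ Finset.range (w.length + 1),
        sig P (w.take k) * (sigRev Q.toFun (w.drop k).reverse r * pd Q i r)) volume 0 t :=
 by
      refine (IntervalIntegrable.sum (μ := volume) (a := 0) (b := t)
        (f := fun k r => sig P (w.take k) * (sigRev Q.toFun (w.drop k).reverse r * pd Q i r))
        (Finset.range (w.length + 1)) (fun k _ => hterm k)).congr_ae
        (Filter.Eventually.of_forall fun r => ?_)
      simp [Finset.sum_apply]
    have haeQ : ∀ᵐ x : ℝ, x ∈ Set.uIoc P.T (P.T + t) →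
        (∑ k ∈ Finset.range (w.length + 1),
          sig P (w.take k) * (sigRev Q.toFun (w.drop k).reverse (x - P.T) * pd Q i (x - P.T)))
        = sigRev (concat P Q).toFun w.reverse x * pd (concat P Q) i x := by
      refine Filter.Eventually.of_forall fun x hmem => ?_
      rw [Set.uIoc_of_le (by linarith [ht.1] : P.T ≤ P.T + t)] at hmem
      have hx1 : P.T < x := hmem.1
      have hx2 : x - P.T ∈ Icc (0:ℝ) Q.T :=
        ⟨by linarith, by have := hmem.2; have := ht.2; linarith⟩
      have hrw := ih (x - P.T) hx2
      rw [show P.T + (x - P.T) = x by ring] at hrw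
      rw [hrw, pd_concat_right i hx1, Finset.sum_mul]
      exact Finset.sum_congr rfl fun k _ => by ring
    have hfint2 : IntervalIntegrable
        (fun s => sigRev (concat P Q).toFun w.reverse s * pd (concat P Q) i s)
        volume P.T (P.T + t) := by
      have h1 := hFint.comp_sub_right P.T
      rw [zero_add, add_comm t P.T] at h1
      refine h1.congr_ae ?_
      rw [Filter.EventuallyEq, MeasureTheory.ae_restrict_iff' measurableSet_uIoc]
      exact haeQ
    -- split the integral
    have hsplit := intervalIntegral.integral_add_adjacent_intervals hfint1 hfint2
    have hA : (∫ s in (0:ℝ)..P.T,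
        sigRev (concat P Q).toFun w.reverse s * pd (concat P Q) i s) = sig P (w ++ [i]) := by
      rw [← intervalIntegral.integral_congr_ae haeP]
      simp only [sig, sigUpTo, List.reverse_append, List.reverse_cons, List.reverse_nil,
        List.nil_append, List.singleton_append]
      rfl
    have hB : (∫ s in P.T..(P.T + t),
        sigRev (concat P Q).toFun w.reverse s * pd (concat P Q) i s)
        = ∑ k ∈ Finset.range (w.length + 1),
          sig P (w.take k) * sigRev Q.toFun ((w.drop k) ++ [i]).reverse t := by
      rw [← intervalIntegral.integral_congr_ae haeQ]
      have hcv := intervalIntegral.integral_comp_sub_right (a := P.T) (b := P.T + t)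
        (fun r => ∑ k ∈ Finset.range (w.length + 1),
          sig P (w.take k) * (sigRev Q.toFun (w.drop k).reverse r * pd Q i r)) P.T
      rw [sub_self, add_sub_cancel_left] at hcv
      rw [hcv]
      rw [intervalIntegral.integral_finset_sum (fun k _ => hterm k)]
      refine Finset.sum_congr rfl fun k _ => ?_
      rw [intervalIntegral.integral_const_mul]
      congr 1
      simp only [List.reverse_append, List.reverse_cons, List.reverse_nil, List.nil_append,
        List.singleton_append]
      rfl
    -- assemble
    have hLHS : sigRev (concat P Q).toFun (w ++ [i]).reverse (P.T + t)
        = (∫ s in (0:ℝ)..P.T,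
            sigRev (concat P Q).toFun w.reverse s * pd (concat P Q) i s)
          + ∫ s in P.T..(P.T + t),
            sigRev (concat P Q).toFun w.reverse s * pd (concat P Q) i s := by
      rw [hsplit]
      simp only [List.reverse_append, List.reverse_cons, List.reverse_nil, List.nil_append,
        List.singleton_append]
      rfl
    rw [hLHS, hA, hB]
    rw [List.length_append, List.length_singleton]
    conv_rhs => rw [Finset.sum_range_succ]
    have hlast : (w ++ [i]).take (w.length + 1) = w ++ [i] := by
      have h : (w ++ [i]).length = w.length + 1 := by simp
      rw [← h, List.take_length]
    have hlastd : (w ++ [i]).drop (w.length + 1) = [] := by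
      have h : (w ++ [i]).length = w.length + 1 := by simp
      rw [← h, List.drop_length]
    rw [hlast, hlastd]
    have hmain : ∑ k ∈ Finset.range (w.length + 1),
        sig P ((w ++ [i]).take k) * sigRev Q.toFun ((w ++ [i]).drop k).reverse t
        = ∑ k ∈ Finset.range (w.length + 1),
          sig P (w.take k) * sigRev Q.toFun ((w.drop k) ++ [i]).reverse t := by
      refine Finset.sum_congr rfl fun k hk => ?_
      have hkle : k ≤ w.length := by
        have := Finset.mem_range.1 hk; omega
      rw [List.take_append_of_le_length hkle, List.drop_append_of_le_length hkle]
    rw [hmain]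
    simp only [List.reverse_nil, sigRev_nil, mul_one]
    ring

theorem chen (hP : IsPath P) (hQ : IsPath Q) (w : Word α) :
    sig (concat P Q) w =
      ∑ k ∈ Finset.range (w.length + 1), sig P (w.take k) * sig Q (w.drop k) := by
  have h := chen_aux hP hQ w Q.T ⟨hQ.1.le, le_rfl⟩
  simpa [sig, sigUpTo, concat_T] using h

end Chen

section Assembly
open Set

variable {α : Type*}

lemma pair_single (X : RawPath α) (w : Word α) (c : ℝ) :
    pair X (Finsupp.single w c) = c * sig X w := by
  simp [pair, Finsupp.linearCombination_single, smul_eq_mul]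

lemma pair_shw (X : RawPath α) (u v : Word α) :
    pair X (shw u v) = ((shuffles u v).map (sig X)).sum := by
  show (Finsupp.linearCombination ℝ (sig X)) (((shuffles u v).map
    fun w => Finsupp.single w (1:ℝ)).sum) = _
  rw [map_list_sum, List.map_map]
  exact congrArg List.sum (List.map_congr_left fun w _ => by
    simp [Function.comp, Finsupp.linearCombination_single])

lemma sig_shuffle {X : RawPath α} (hX : IsPath X) (u v : Word α) :
    sig X u * sig X v = ((shuffles u v).map (sig X)).sum := by
  have h := shuffle_pointwise hX u.reverse v.reverse X.T (right_mem_Icc.2 hX.1.le)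
  have hm := shuffles_reverse_multiset (u.length + v.length) u v le_rfl
  have hstep : ((shuffles u.reverse v.reverse).map (fun w => sigRev X.toFun w X.T)).sum
      = ((shuffles u v).map (sig X)).sum := by
    have h1 : ((shuffles u.reverse v.reverse).map (fun w => sigRev X.toFun w X.T)).sum
        = (((shuffles u.reverse v.reverse : Multiset (Word α))).map
          (fun w => sigRev X.toFun w X.T)).sum := by
      rw [Multiset.map_coe, Multiset.sum_coe]
    rw [h1, ← hm, Multiset.map_map]
    rw [Multiset.map_coe, Multiset.sum_coe]
    rfl
  exact h.trans hstep

lemma pair_sh {X : RawPath α} (hX : IsPath X) (x y : TA α) :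
    pair X (sh x y) = pair X x * pair X y := by
  have hp : ∀ z : TA α, pair X z = z.sum fun w c => c * sig X w := by
    intro z
    rw [pair, Finsupp.linearCombination_apply]
    simp [smul_eq_mul]
  have hL : pair X (sh x y)
      = x.sum fun u cu => y.sum fun v cv => (cu * cv) * (sig X u * sig X v) := by
    show (Finsupp.linearCombination ℝ (sig X)) (x.sum fun u cu =>
      y.sum fun v cv => (cu * cv) • shw u v) = _
    rw [map_finsuppSum]
    refine Finsupp.sum_congr fun u _ => ?_
    rw [map_finsuppSum]
    refine Finsupp.sum_congr fun v _ => ?_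
    rw [map_smul, smul_eq_mul]
    congr 1
    rw [← pair, pair_shw, sig_shuffle hX]
  rw [hL, hp x, hp y, Finsupp.sum_mul]
  refine Finsupp.sum_congr fun u _ => ?_
  rw [Finsupp.mul_sum]
  refine Finsupp.sum_congr fun v _ => ?_
  ring

end Assembly


/-- If `F, G` are regular maps on paths started at `0`, with
corresponding linear maps `H₁, H₂`, then `X ↦ F(X) ⊔ G(X)` is regular with
corresponding linear map `x ↦ Σ_{x=uv} H₁(u) ⧢ H₂(v)`. -/
theorem statement14 {d t : ℕ}
    (F G : RawPath (Fin d) → RawPath (Fin t))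
    (H₁ H₂ : TA (Fin t) →ₗ[ℝ] TA (Fin d))
    (hF : ∀ X : RawPath (Fin d), IsPath X → (∀ i, X.toFun 0 i = 0) →
      IsPath (F X) ∧ ∀ j, (F X).toFun 0 j = 0)
    (hG : ∀ X : RawPath (Fin d), IsPath X → (∀ i, X.toFun 0 i = 0) →
      IsPath (G X) ∧ ∀ j, (G X).toFun 0 j = 0)
    (hFH : ∀ X : RawPath (Fin d), IsPath X → (∀ i, X.toFun 0 i = 0) →
      ∀ x : TA (Fin t), pair (F X) x = pair X (H₁ x))
    (hGH : ∀ X : RawPath (Fin d), IsPath X → (∀ i, X.toFun 0 i = 0) →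
      ∀ x : TA (Fin t), pair (G X) x = pair X (H₂ x)) :
    ∃ H₃ : TA (Fin t) →ₗ[ℝ] TA (Fin d),
      (∀ w : Word (Fin t),
        H₃ (Finsupp.single w 1) = ∑ k ∈ Finset.range (w.length + 1),
          sh (H₁ (Finsupp.single (w.take k) 1)) (H₂ (Finsupp.single (w.drop k) 1))) ∧
      ∀ X : RawPath (Fin d), IsPath X → (∀ i, X.toFun 0 i = 0) →
        ∀ x : TA (Fin t), pair (concat (F X) (G X)) x = pair X (H₃ x) := by
  classical
  refine ⟨Finsupp.linearCombination ℝ (fun w : Word (Fin t) =>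
    ∑ k ∈ Finset.range (w.length + 1),
      sh (H₁ (Finsupp.single (w.take k) 1)) (H₂ (Finsupp.single (w.drop k) 1))), ?_, ?_⟩
  · intro w
    rw [Finsupp.linearCombination_single, one_smul]
  · intro X hX h0 x
    obtain ⟨hFX, _⟩ := hF X hX h0
    obtain ⟨hGX, _⟩ := hG X hX h0
    have key : ∀ w : Word (Fin t), sig (concat (F X) (G X)) w =
        pair X (∑ k ∈ Finset.range (w.length + 1),
          sh (H₁ (Finsupp.single (w.take k) 1)) (H₂ (Finsupp.single (w.drop k) 1))) := by
      intro w
      rw [chen hFX hGX w]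
      have hsum : pair X (∑ k ∈ Finset.range (w.length + 1),
          sh (H₁ (Finsupp.single (w.take k) 1)) (H₂ (Finsupp.single (w.drop k) 1)))
          = ∑ k ∈ Finset.range (w.length + 1),
            pair X (sh (H₁ (Finsupp.single (w.take k) 1)) (H₂ (Finsupp.single (w.drop k) 1))) :=
        map_sum (Finsupp.linearCombination ℝ (sig X)) _ _
      rw [hsum]
      refine Finset.sum_congr rfl fun k _ => ?_
      rw [pair_sh hX, ← hFH X hX h0, ← hGH X hX h0, pair_single, pair_single, one_mul, one_mul]
    induction x using Finsupp.induction_linear with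
    | zero => simp [pair]
    | add a b ha hb =>
      show (Finsupp.linearCombination ℝ (sig (concat (F X) (G X)))) (a + b)
        = (Finsupp.linearCombination ℝ (sig X)) (_ : TA (Fin d))
      rw [map_add, map_add, map_add]
      exact congrArg₂ (· + ·) ha hb
    | single w c =>
      show (Finsupp.linearCombination ℝ (sig (concat (F X) (G X)))) (Finsupp.single w c)
        = (Finsupp.linearCombination ℝ (sig X)) (_ : TA (Fin d))
      rw [Finsupp.linearCombination_single, Finsupp.linearCombination_single, map_smul]
      rw [smul_eq_mul, smul_eq_mul]
      congr 1
      exact key w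


end PathVarieties
end
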